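/- For any a ∈ ℝ^5 and the unit sphere S^4 ⊂ ℝ^5, ∫_{S^4} |x - a| dH^4(x) ≥ ∫_{S^4} |x| dH^4(x) = |S^4|, with equality iff a = 0. -/

import Mathlib

open MeasureTheory Metric Finset

local notation "E5" => EuclideanSpace ℝ (Fin 5)

lemma abs_coord_le {n : Type*} [Fintype n] (x : EuclideanSpace ℝ n) (i : n) : |x i| ≤ ‖x‖ := by
  rw [EuclideanSpace.norm_eq]
  have : |x i| = Real.sqrt (‖x i‖ ^ 2) := by
    rw [Real.sqrt_sq_eq_abs, abs_norm, Real.norm_eq_abs]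
  rw [this]
  exact Real.sqrt_le_sqrt (Finset.single_le_sum (f := fun j => ‖x j‖ ^ 2) (fun j _ => sq_nonneg _) (mem_univ i))

lemma dist_coord_le {n : Type*} [Fintype n] (x y : EuclideanSpace ℝ n) (i : n) :
    dist (x i) (y i) ≤ dist x y := by
  rw [Real.dist_eq, dist_eq_norm]
  have h : x i - y i = (x - y) i := by simp
  rw [h]
  exact abs_coord_le (x - y) i

noncomputable def projE : E5 → (Fin 4 → ℝ) := fun x j => x j.castSucc

lemma projE_lipschitz : LipschitzWith 1 projE := by
  apply LipschitzWith.of_dist_le_mul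
  intro x y
  norm_num
  rw [dist_pi_le_iff dist_nonneg]
  intro j
  exact dist_coord_le x y j.castSucc

lemma cube_subset_proj_sphere :
    (Set.univ.pi fun _ : Fin 4 => Set.Icc (-(1/2) : ℝ) (1/2)) ⊆
      projE '' (sphere (0 : E5) 1) := by
  intro y hy
  simp only [Set.mem_pi, Set.mem_univ, forall_true_left, Set.mem_Icc] at hy
  set c : ℝ := Real.sqrt (1 - ∑ j : Fin 4, y j ^ 2) with hc
  have hsum : ∑ j : Fin 4, y j ^ 2 ≤ 1 := by
    have : ∀ j : Fin 4, y j ^ 2 ≤ (1/2 : ℝ)^2 := by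
      intro j
      have := hy j
      nlinarith [this.1, this.2]
    calc ∑ j : Fin 4, y j ^ 2 ≤ ∑ _j : Fin 4, (1/2 : ℝ)^2 :=
          Finset.sum_le_sum fun j _ => this j
      _ = 1 := by norm_num
  set x : E5 := (WithLp.equiv 2 (Fin 5 → ℝ)).symm (Fin.snoc y c) with hx
  have hxapp : ∀ i : Fin 5, x i = Fin.snoc (α := fun _ => ℝ) y c i := fun i => by rw [hx]; rfl
  refine ⟨x, ?_, ?_⟩
  · rw [mem_sphere_zero_iff_norm, EuclideanSpace.norm_eq]
    have : ∑ i : Fin 5, ‖x i‖ ^ 2 = 1 := by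
      rw [Fin.sum_univ_castSucc]
      simp only [hxapp, Fin.snoc_castSucc, Fin.snoc_last, Real.norm_eq_abs, sq_abs]
      rw [hc, Real.sq_sqrt (by linarith)]
      ring
    rw [this, Real.sqrt_one]
  · funext j
    simp only [projE, hxapp, Fin.snoc_castSucc]

lemma sphere_measure_pos : 0 < μH[4] (sphere (0 : E5) 1) := by
  have h1 : μH[(4:ℝ)] (Set.univ.pi fun _ : Fin 4 => Set.Icc (-(1/2) : ℝ) (1/2)) = 1 := by
    have := MeasureTheory.hausdorffMeasure_pi_real (ι := Fin 4)
    have h4 : ((Fintype.card (Fin 4) : ℝ)) = (4:ℝ) := by simp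
    rw [h4] at this
    rw [this]
    rw [volume_pi_pi]
    simp [Real.volume_Icc]
    norm_num
  have h2 : μH[(4:ℝ)] (Set.univ.pi fun _ : Fin 4 => Set.Icc (-(1/2) : ℝ) (1/2)) ≤
      μH[(4:ℝ)] (projE '' (sphere (0 : E5) 1)) :=
    measure_mono cube_subset_proj_sphere
  have h3 : μH[(4:ℝ)] (projE '' (sphere (0 : E5) 1)) ≤ 1 ^ (4:ℝ) * μH[4] (sphere (0 : E5) 1) :=
    projE_lipschitz.hausdorffMeasure_image_le (by norm_num) _
  have := h2.trans h3
  rw [h1] at this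
  simp only [ENNReal.coe_one, ENNReal.one_rpow, one_mul] at this
  exact lt_of_lt_of_le one_pos this |>.trans_le le_rfl |> fun h => lt_of_lt_of_le zero_lt_one this

noncomputable def faceE (i : Fin 5) (ε : ℝ) : Set E5 :=
  {x : E5 | x i = ε ∧ ∀ j : Fin 5, |x j| ≤ 1}

lemma faceE_measure_lt_top (i : Fin 5) (ε : ℝ) : μH[4] (faceE i ε) < ⊤ := by
  set φ : (Fin 4 → ℝ) → E5 :=
    fun y => (WithLp.equiv 2 (Fin 5 → ℝ)).symm (Fin.insertNth i ε y) with hφ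
  have hφapp : ∀ y (k : Fin 5), φ y k = Fin.insertNth (α := fun _ => ℝ) i ε y k :=
    fun y k => rfl
  have hlip : LipschitzWith 2 φ := by
    apply LipschitzWith.of_dist_le_mul
    intro y z
    rw [EuclideanSpace.dist_eq]
    have hsum : ∑ k : Fin 5, dist (φ y k) (φ z k) ^ 2 ≤ 4 * dist y z ^ 2 := by
      have hterm : ∀ k : Fin 5, dist (φ y k) (φ z k) ^ 2 ≤
          (if k = i then 0 else dist y z ^ 2) := by
        intro k
        rcases eq_or_ne k i with rfl | hk
        · simp [hφapp, Fin.insertNth_apply_same]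
        · simp only [hk, if_false]
          obtain ⟨j, rfl⟩ := Fin.exists_succAbove_eq hk
          rw [hφapp, hφapp, Fin.insertNth_apply_succAbove, Fin.insertNth_apply_succAbove]
          have := dist_le_pi_dist y z j
          have h0 : (0:ℝ) ≤ dist (y j) (z j) := dist_nonneg
          nlinarith
      calc ∑ k : Fin 5, dist (φ y k) (φ z k) ^ 2
          ≤ ∑ k : Fin 5, (if k = i then 0 else dist y z ^ 2) :=
            Finset.sum_le_sum fun k _ => hterm k
        _ ≤ 4 * dist y z ^ 2 := by
            rw [Finset.sum_ite, Finset.sum_const, Finset.sum_const]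
            have hc : (Finset.univ.filter fun k : Fin 5 => ¬ k = i).card = 4 := by
              rw [Finset.filter_not, Finset.filter_eq']
              rw [Finset.card_sdiff_of_subset (by simp)]
              simp
            rw [hc]
            simp [smul_eq_mul]
    have := Real.sqrt_le_sqrt hsum
    rw [show (4:ℝ) * dist y z ^ 2 = (2 * dist y z)^2 by ring,
      Real.sqrt_sq (by positivity)] at this
    refine this.trans ?_
    norm_num
  have hsub : faceE i ε ⊆ φ '' (Set.univ.pi fun _ : Fin 4 => Set.Icc (-1:ℝ) 1) := by
    rintro x ⟨hxi, hxall⟩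
    refine ⟨fun j => x (i.succAbove j), ?_, ?_⟩
    · intro j _
      exact abs_le.1 (hxall _)
    · have : ∀ k : Fin 5, φ (fun j => x (i.succAbove j)) k = x k := by
        intro k
        rw [hφapp]
        rcases eq_or_ne k i with rfl | hk
        · rw [Fin.insertNth_apply_same, hxi]
        · obtain ⟨j, rfl⟩ := Fin.exists_succAbove_eq hk
          rw [Fin.insertNth_apply_succAbove]
      exact PiLp.ext this
  have hμcube : μH[(4:ℝ)] (Set.univ.pi fun _ : Fin 4 => Set.Icc (-1:ℝ) 1) = 16 := by
    have h := MeasureTheory.hausdorffMeasure_pi_real (ι := Fin 4)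
    have h4 : ((Fintype.card (Fin 4) : ℝ)) = (4:ℝ) := by simp
    rw [h4] at h
    rw [h, volume_pi_pi]
    simp only [Real.volume_Icc]
    norm_num
  have hb := hlip.hausdorffMeasure_image_le (d := 4) (by norm_num)
    (Set.univ.pi fun _ : Fin 4 => Set.Icc (-1:ℝ) 1)
  refine (measure_mono hsub).trans_lt (hb.trans_lt ?_)
  rw [hμcube]
  exact ENNReal.mul_lt_top (ENNReal.rpow_lt_top_of_nonneg (by norm_num) ENNReal.coe_ne_top) (by norm_num)

noncomputable def radE : E5 → E5 := fun x => ‖x‖⁻¹ • x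

lemma radE_lipschitzOn : LipschitzOnWith 2 radE {x : E5 | 1 ≤ ‖x‖} := by
  rw [lipschitzOnWith_iff_dist_le_mul]
  intro x hx y hy
  push_cast
  simp only [Set.mem_setOf_eq] at hx hy
  have hxpos : (0:ℝ) < ‖x‖ := lt_of_lt_of_le one_pos hx
  have hypos : (0:ℝ) < ‖y‖ := lt_of_lt_of_le one_pos hy
  have habs : |‖x‖ - ‖y‖| ≤ ‖x - y‖ := abs_norm_sub_norm_le x y
  have hsplit : radE x - radE y = ‖x‖⁻¹ • (x - y) + (‖x‖⁻¹ - ‖y‖⁻¹) • y := by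
    simp only [radE, smul_sub, sub_smul]
    abel
  have h1 : ‖‖x‖⁻¹ • (x - y)‖ ≤ ‖x - y‖ := by
    rw [norm_smul, Real.norm_eq_abs, abs_of_pos (inv_pos.2 hxpos)]
    calc ‖x‖⁻¹ * ‖x - y‖ ≤ 1 * ‖x - y‖ := by
          apply mul_le_mul_of_nonneg_right _ (norm_nonneg _)
          exact inv_le_one_of_one_le₀ hx
      _ = ‖x - y‖ := one_mul _
  have h2 : ‖(‖x‖⁻¹ - ‖y‖⁻¹) • y‖ ≤ ‖x - y‖ := by
    rw [norm_smul, Real.norm_eq_abs]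
    have heq : ‖x‖⁻¹ - ‖y‖⁻¹ = (‖y‖ - ‖x‖) / (‖x‖ * ‖y‖) := by
      field_simp
    rw [heq, abs_div, abs_mul, abs_of_pos hxpos, abs_of_pos hypos]
    rw [div_mul_eq_mul_div, mul_comm (‖x‖) (‖y‖), mul_div_assoc]
    have : ‖y‖ / (‖y‖ * ‖x‖) = ‖x‖⁻¹ := by field_simp
    rw [this]
    calc |‖y‖ - ‖x‖| * ‖x‖⁻¹ ≤ |‖y‖ - ‖x‖| * 1 := by
          apply mul_le_mul_of_nonneg_left _ (abs_nonneg _)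
          exact inv_le_one_of_one_le₀ hx
      _ = |‖y‖ - ‖x‖| := mul_one _
      _ = |‖x‖ - ‖y‖| := abs_sub_comm _ _
      _ ≤ ‖x - y‖ := habs
  calc dist (radE x) (radE y) = ‖radE x - radE y‖ := dist_eq_norm _ _
    _ = ‖‖x‖⁻¹ • (x - y) + (‖x‖⁻¹ - ‖y‖⁻¹) • y‖ := by rw [hsplit]
    _ ≤ ‖‖x‖⁻¹ • (x - y)‖ + ‖(‖x‖⁻¹ - ‖y‖⁻¹) • y‖ := norm_add_le _ _
    _ ≤ ‖x - y‖ + ‖x - y‖ := add_le_add h1 h2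
    _ = 2 * dist x y := by rw [dist_eq_norm]; ring

lemma sphere_cover : sphere (0 : E5) 1 ⊆
    radE '' ({x : E5 | 1 ≤ ‖x‖} ∩ ⋃ i : Fin 5, (faceE i 1 ∪ faceE i (-1))) := by
  intro u hu
  rw [mem_sphere_zero_iff_norm] at hu
  obtain ⟨i, _, hi⟩ := Finset.exists_max_image Finset.univ (fun j => |u j|)
    ⟨0, Finset.mem_univ 0⟩
  have hi' : ∀ j : Fin 5, |u j| ≤ |u i| := fun j => hi j (Finset.mem_univ j)
  have hipos : 0 < |u i| := by
    by_contra h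
    push_neg at h
    have hall : ∀ j : Fin 5, u j = 0 := by
      intro j
      have := (hi' j).trans h
      exact abs_nonpos_iff.1 ((hi' j).trans h)
    have : u = 0 := PiLp.ext fun j => hall j
    rw [this, norm_zero] at hu
    norm_num at hu
  set t : ℝ := |u i|⁻¹ with ht
  have htpos : 0 < t := inv_pos.2 hipos
  have hile : |u i| ≤ 1 := hu ▸ abs_coord_le u i
  have ht1 : 1 ≤ t := one_le_inv_iff₀.2 ⟨hipos, hile⟩
  set x : E5 := t • u with hxdef
  have hxapp : ∀ j : Fin 5, x j = t * u j := fun j => rfl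
  have hxn : ‖x‖ = t := by
    rw [hxdef, norm_smul, Real.norm_eq_abs, abs_of_pos htpos, hu, mul_one]
  refine ⟨x, ⟨?_, ?_⟩, ?_⟩
  · rw [Set.mem_setOf_eq, hxn]; exact ht1
  · rw [Set.mem_iUnion]
    refine ⟨i, ?_⟩
    have hxi : |x i| = 1 := by
      rw [hxapp, abs_mul, abs_of_pos htpos, ht, inv_mul_cancel₀ (ne_of_gt hipos)]
    have hxj : ∀ j : Fin 5, |x j| ≤ 1 := by
      intro j
      rw [hxapp, abs_mul, abs_of_pos htpos]
      calc t * |u j| ≤ t * |u i| := mul_le_mul_of_nonneg_left (hi' j) htpos.le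
        _ = 1 := by rw [ht, inv_mul_cancel₀ (ne_of_gt hipos)]
    rcases abs_eq (by norm_num : (0:ℝ) ≤ 1) |>.1 hxi with h | h
    · exact Or.inl ⟨h, hxj⟩
    · exact Or.inr ⟨h, hxj⟩
  · rw [radE, hxn, hxdef, smul_smul, inv_mul_cancel₀ (ne_of_gt htpos), one_smul]

lemma sphere_measure_lt_top : μH[4] (sphere (0 : E5) 1) < ⊤ := by
  have hB : μH[(4:ℝ)] (⋃ i : Fin 5, (faceE i 1 ∪ faceE i (-1))) < ⊤ := by
    refine lt_of_le_of_lt (measure_iUnion_fintype_le _ _) ?_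
    refine ENNReal.sum_lt_top.2 fun i _ => ?_
    refine lt_of_le_of_lt (measure_union_le _ _) ?_
    exact ENNReal.add_lt_top.2 ⟨faceE_measure_lt_top i 1, faceE_measure_lt_top i (-1)⟩
  have h1 := (radE_lipschitzOn.mono
      (Set.inter_subset_left (t := ⋃ i : Fin 5, (faceE i 1 ∪ faceE i (-1))))).hausdorffMeasure_image_le
    (d := 4) (by norm_num)
  have h2 : μH[(4:ℝ)] ({x : E5 | 1 ≤ ‖x‖} ∩ ⋃ i : Fin 5, (faceE i 1 ∪ faceE i (-1))) ≤
      μH[(4:ℝ)] (⋃ i : Fin 5, (faceE i 1 ∪ faceE i (-1))) :=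
    measure_mono Set.inter_subset_right
  refine lt_of_le_of_lt (measure_mono sphere_cover) (h1.trans_lt ?_)
  refine ENNReal.mul_lt_top (ENNReal.rpow_lt_top_of_nonneg (by norm_num) ENNReal.coe_ne_top) ?_
  exact lt_of_le_of_lt h2 hB

lemma neg_setIntegral (g : E5 → ℝ) :
    ∫ x in sphere (0 : E5) 1, g (-x) ∂(μH[4]) = ∫ x in sphere (0 : E5) 1, g x ∂(μH[4]) := by
  set e : E5 ≃ᵢ E5 := IsometryEquiv.neg E5 with he
  have happ : ∀ x : E5, e x = -x := fun x => rfl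
  have himg : (⇑e) '' (sphere (0 : E5) 1) = sphere (0 : E5) 1 := by
    ext z
    simp only [Set.mem_image, mem_sphere_zero_iff_norm]
    constructor
    · rintro ⟨x, hx, rfl⟩
      rw [happ, norm_neg]; exact hx
    · intro hz
      exact ⟨-z, by rw [norm_neg]; exact hz, by rw [happ, neg_neg]⟩
  have := (e.measurePreserving_hausdorffMeasure 4).setIntegral_image_emb
    e.toHomeomorph.measurableEmbedding g (sphere (0 : E5) 1)
  rw [himg] at this
  simp only [happ] at this
  rw [← this]

lemma integrableOn_norm_sub (b : E5) :
    IntegrableOn (fun x => ‖x - b‖) (sphere (0 : E5) 1) (μH[4]) := by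
  apply Measure.integrableOn_of_bounded (M := 1 + ‖b‖) sphere_measure_lt_top.ne
    ((continuous_id.sub continuous_const).norm.aestronglyMeasurable)
  filter_upwards [ae_restrict_mem isClosed_sphere.measurableSet] with x hx
  rw [mem_sphere_zero_iff_norm] at hx
  rw [Real.norm_eq_abs, abs_of_nonneg (norm_nonneg _)]
  calc ‖x - b‖ ≤ ‖x‖ + ‖b‖ := norm_sub_le _ _
    _ = 1 + ‖b‖ := by rw [hx]

lemma integrableOn_norm_add (b : E5) :
    IntegrableOn (fun x => ‖x + b‖) (sphere (0 : E5) 1) (μH[4]) := by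
  have := integrableOn_norm_sub (-b)
  simpa only [sub_neg_eq_add] using this

lemma neg_norm_integral (a : E5) :
    ∫ x in sphere (0 : E5) 1, ‖x + a‖ ∂(μH[4]) =
      ∫ x in sphere (0 : E5) 1, ‖x - a‖ ∂(μH[4]) := by
  have := neg_setIntegral (fun y => ‖y - a‖)
  simp only [← this]
  congr 1
  funext x
  rw [show -x - a = -(x + a) by abel, norm_neg]

lemma norm_integral_eq (a : E5) : (∫ x in sphere (0 : E5) 1, ‖x‖ ∂(μH[4])) =
    (μH[4] (sphere (0 : EuclideanSpace ℝ (Fin 5)) 1)).toReal := by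
  rw [setIntegral_congr_fun isClosed_sphere.measurableSet
    (g := fun _ => (1:ℝ)) (fun x hx => mem_sphere_zero_iff_norm.1 hx)]
  rw [setIntegral_const, smul_eq_mul, mul_one, measureReal_def]

lemma int_norm : IntegrableOn (fun x : E5 => ‖x‖) (sphere (0 : E5) 1) (μH[4]) := by
  have := integrableOn_norm_sub (0 : E5)
  simpa only [sub_zero] using this

lemma main_ineq (a : E5) : 2 * (∫ x in sphere (0 : E5) 1, ‖x‖ ∂(μH[4])) ≤
    2 * (∫ x in sphere (0 : E5) 1, ‖x - a‖ ∂(μH[4])) := by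
  have hadd : ∫ x in sphere (0 : E5) 1, (‖x - a‖ + ‖x + a‖) ∂(μH[4]) =
      (∫ x in sphere (0 : E5) 1, ‖x - a‖ ∂(μH[4])) +
      (∫ x in sphere (0 : E5) 1, ‖x + a‖ ∂(μH[4])) :=
    integral_add (integrableOn_norm_sub a) (integrableOn_norm_add a)
  have hpt : ∀ x : E5, 2 * ‖x‖ ≤ ‖x - a‖ + ‖x + a‖ := by
    intro x
    calc 2 * ‖x‖ = ‖(x - a) + (x + a)‖ := by
          rw [show (x - a) + (x + a) = x + x by abel, ← two_smul ℝ x, norm_smul]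
          simp
      _ ≤ ‖x - a‖ + ‖x + a‖ := norm_add_le _ _
  have hmono : ∫ x in sphere (0 : E5) 1, 2 * ‖x‖ ∂(μH[4]) ≤
      ∫ x in sphere (0 : E5) 1, (‖x - a‖ + ‖x + a‖) ∂(μH[4]) := by
    apply setIntegral_mono (int_norm.const_mul 2)
      ((integrableOn_norm_sub a).add (integrableOn_norm_add a))
    intro x
    exact hpt x
  rw [integral_const_mul] at hmono
  rw [hadd, neg_norm_integral a] at hmono
  linarith

theorem sphere_integral_dist_ge (a : EuclideanSpace ℝ (Fin 5)) :
    (∫ x in sphere (0 : EuclideanSpace ℝ (Fin 5)) 1, ‖x - a‖ ∂(μH[4])) ≥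
      (∫ x in sphere (0 : EuclideanSpace ℝ (Fin 5)) 1, ‖x‖ ∂(μH[4])) ∧
    (∫ x in sphere (0 : EuclideanSpace ℝ (Fin 5)) 1, ‖x‖ ∂(μH[4])) =
      (μH[4] (sphere (0 : EuclideanSpace ℝ (Fin 5)) 1)).toReal ∧
    ((∫ x in sphere (0 : EuclideanSpace ℝ (Fin 5)) 1, ‖x - a‖ ∂(μH[4])) =
        (∫ x in sphere (0 : EuclideanSpace ℝ (Fin 5)) 1, ‖x‖ ∂(μH[4])) ↔ a = 0) := by
  refine ⟨by linarith [main_ineq a], norm_integral_eq a, ?_, ?_⟩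
  · -- forward direction
    intro hI
    by_contra ha
    set g : E5 → ℝ := fun x => ‖x - a‖ + ‖x + a‖ - 2 * ‖x‖ with hg
    have hg0 : 0 ≤ g := by
      intro x
      have hpt : 2 * ‖x‖ ≤ ‖x - a‖ + ‖x + a‖ := by
        calc 2 * ‖x‖ = ‖(x - a) + (x + a)‖ := by
              rw [show (x - a) + (x + a) = x + x by abel, ← two_smul ℝ x, norm_smul]
              simp
          _ ≤ ‖x - a‖ + ‖x + a‖ := norm_add_le _ _
      simp only [hg, Pi.zero_apply]
      linarith
    have hgint : Integrable g ((μH[4]).restrict (sphere (0 : E5) 1)) :=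
      ((integrableOn_norm_sub a).add (integrableOn_norm_add a)).sub (int_norm.const_mul 2)
    have hint1 : IntegrableOn (fun x : E5 => ‖x - a‖ + ‖x + a‖) (sphere (0 : E5) 1) (μH[4]) :=
      (integrableOn_norm_sub a).add (integrableOn_norm_add a)
    have hint2 : IntegrableOn (fun x : E5 => 2 * ‖x‖) (sphere (0 : E5) 1) (μH[4]) :=
      int_norm.const_mul 2
    have hgzero : ∫ x in sphere (0 : E5) 1, g x ∂(μH[4]) = 0 := by
      simp only [hg]
      rw [integral_sub hint1 hint2,
        integral_add (integrableOn_norm_sub a) (integrableOn_norm_add a),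
        integral_const_mul, neg_norm_integral a, hI]
      ring
    have hae : g =ᵐ[(μH[4]).restrict (sphere (0 : E5) 1)] 0 :=
      (integral_eq_zero_iff_of_nonneg hg0 hgint).1 hgzero
    have hgcont : Continuous g := by
      apply Continuous.sub
      · exact ((continuous_id.sub continuous_const).norm.add
          (continuous_id.add continuous_const).norm)
      · exact continuous_const.mul continuous_norm
    have hZmeas : MeasurableSet {x : E5 | g x ≠ 0} :=
      (hgcont.measurable (measurableSet_singleton 0)).compl
    have hnull : μH[4] ({x : E5 | g x ≠ 0} ∩ sphere (0 : E5) 1) = 0 := by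
      have hres : ((μH[4]).restrict (sphere (0:E5) 1)) {x : E5 | g x ≠ 0} = 0 := by
        have := ae_iff.1 hae
        simpa using this
      rwa [Measure.restrict_apply hZmeas] at hres
    haveI : NullSingletonClass (MeasureTheory.Measure.hausdorffMeasure (X := EuclideanSpace ℝ (Fin 5)) 4) :=
      Measure.noAtoms_hausdorff (EuclideanSpace ℝ (Fin 5)) (by norm_num)
    have hsub : sphere (0 : E5) 1 ∩ {x : E5 | g x = 0} ⊆
        {(‖a‖⁻¹) • a, -((‖a‖⁻¹) • a)} := by
      rintro x ⟨hxS, hgx⟩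
      rw [mem_sphere_zero_iff_norm] at hxS
      simp only [Set.mem_setOf_eq, hg] at hgx
      have hadd : ‖(x - a) + (x + a)‖ = ‖x - a‖ + ‖x + a‖ := by
        rw [show (x - a) + (x + a) = x + x by abel, ← two_smul ℝ x, norm_smul]
        simp [hxS]
        linarith
      have hray : SameRay ℝ (x - a) (x + a) := sameRay_iff_norm_add.2 hadd
      obtain ⟨u, r₁, r₂, hr₁, hr₂, hsum1, hxa1, hxa2⟩ := hray.exists_eq_smul
      have hdiff : (r₂ - r₁) • u = a + a := by
        rw [sub_smul, ← hxa1, ← hxa2]; abel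
      have hsum2 : (r₁ + r₂) • u = x + x := by
        rw [add_smul, ← hxa1, ← hxa2]; abel
      have hne : r₂ ≠ r₁ := by
        intro h
        rw [h, sub_self, zero_smul] at hdiff
        have h2a : (2:ℝ) • a = 0 := by rw [two_smul]; exact hdiff.symm
        exact ha ((smul_eq_zero.1 h2a).resolve_left two_ne_zero)
      set c : ℝ := (r₁ + r₂) / (r₂ - r₁) with hc
      have hxca : x = c • a := by
        have hu : u = (r₂ - r₁)⁻¹ • (a + a) := by
          rw [← hdiff, smul_smul, inv_mul_cancel₀ (sub_ne_zero.2 hne), one_smul]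
        have h2x : x + x = c • a + c • a := by
          rw [← hsum2, hu, smul_smul, smul_add, hc, div_eq_mul_inv]
        have h2' : (2:ℝ) • x = (2:ℝ) • (c • a) := by
          rw [two_smul, two_smul]; exact h2x
        exact smul_right_injective E5 (two_ne_zero) h2'
      have hxnorm : ‖x‖ = |c| * ‖a‖ := by rw [hxca, norm_smul, Real.norm_eq_abs]
      have hnormc : |c| * ‖a‖ = 1 := by rw [← hxnorm, hxS]
      have hapos : (0:ℝ) < ‖a‖ := norm_pos_iff.2 ha
      have hcabs : |c| = ‖a‖⁻¹ := by
        rw [inv_eq_one_div, eq_div_iff (ne_of_gt hapos)]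
        exact hnormc
      rcases abs_eq (le_of_lt (inv_pos.2 hapos)) |>.1 hcabs with h | h
      · rw [hxca, h]; exact Set.mem_insert _ _
      · rw [hxca, h, neg_smul]; exact Set.mem_insert_of_mem _ rfl
    have hpair : μH[(4:ℝ)] ({(‖a‖⁻¹) • a, -((‖a‖⁻¹) • a)} : Set E5) = 0 :=
      ((Set.countable_singleton _).insert _).measure_zero _
    have hZnull : μH[(4:ℝ)] (sphere (0 : E5) 1 ∩ {x : E5 | g x = 0}) = 0 :=
      measure_mono_null hsub hpair
    have hcover : sphere (0 : E5) 1 ⊆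
        (sphere (0 : E5) 1 ∩ {x : E5 | g x = 0}) ∪ ({x : E5 | g x ≠ 0} ∩ sphere (0 : E5) 1) := by
      intro x hx
      by_cases h : g x = 0
      · exact Or.inl ⟨hx, h⟩
      · exact Or.inr ⟨h, hx⟩
    have : μH[(4:ℝ)] (sphere (0 : E5) 1) = 0 := by
      refine measure_mono_null hcover ?_
      exact measure_union_null hZnull hnull
    exact absurd this (ne_of_gt sphere_measure_pos)
  · -- backward direction
    intro ha
    rw [ha]
    simp
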